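/- Let f ∈ L¹(ℝ) with f ≥ 0 and ‖f‖_{L¹} > 0, let p ≥ 1 and R > 0, and suppose p‖f‖_{L¹} < π. Then ∫_{B_R} exp( (p/π) ∫_ℝ log((1+|y|)/|x−y|) f(y) dy ) dx < +∞, where B_R = (−R, R). -/

import Mathlib

open MeasureTheory Filter Set Topology

lemma real_rpow_add_le_add_rpow {a b q : ℝ} (ha : 0 ≤ a) (hb : 0 ≤ b)
    (hq : 0 ≤ q) (hq1 : q ≤ 1) : (a + b) ^ q ≤ a ^ q + b ^ q := by
  have h := NNReal.rpow_add_le_add_rpow a.toNNReal b.toNNReal hq hq1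
  have h' := NNReal.coe_le_coe.2 h
  push_cast at h'
  rwa [Real.coe_toNNReal a ha, Real.coe_toNNReal b hb] at h'

lemma abs_le_exp_add_exp_neg (t : ℝ) : |t| ≤ Real.exp t + Real.exp (-t) := by
  have h1 := Real.add_one_le_exp t
  have h2 := Real.add_one_le_exp (-t)
  have e1 := Real.exp_pos t
  have e2 := Real.exp_pos (-t)
  rcases abs_cases t with ⟨h, _⟩ | ⟨h, _⟩ <;> rw [h] <;> linarith

/-- `|u| ^ (-α)` is integrable on bounded intervals when `α < 1`. -/
lemma integrableOn_abs_rpow_neg {α : ℝ} (hα : α < 1) (a b : ℝ) :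
    IntegrableOn (fun u : ℝ => |u| ^ (-α)) (Ioo a b) := by
  set c := max |a| |b| with hc
  have hc0 : 0 ≤ c := le_trans (abs_nonneg a) (le_max_left _ _)
  -- positive part
  have h1 : IntegrableOn (fun u : ℝ => u ^ (-α)) (Ioc 0 c) := by
    have := intervalIntegral.intervalIntegrable_rpow' (a := 0) (b := c) (r := -α)
      (by linarith)
    rwa [intervalIntegrable_iff_integrableOn_Ioc_of_le hc0] at this
  have h2 : IntegrableOn (fun u : ℝ => |u| ^ (-α)) (Ioc 0 c) := by
    refine h1.congr_fun (fun u hu => ?_) measurableSet_Ioc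
    rw [abs_of_pos hu.1]
  have h2' : IntegrableOn (fun u : ℝ => |u| ^ (-α)) (Icc 0 c) := by
    rw [IntegrableOn, ← Measure.restrict_congr_set Ioc_ae_eq_Icc]
    exact h2
  -- negative part, by reflection
  have h3 : IntegrableOn (fun u : ℝ => |u| ^ (-α)) (Ico (-c) 0) := by
    have hind : Integrable ((Ioc (0:ℝ) c).indicator (fun u : ℝ => |u| ^ (-α))) :=
      (integrable_indicator_iff measurableSet_Ioc).2 h2
    have hneg := hind.comp_neg
    have heq : (fun u : ℝ => (Ioc (0:ℝ) c).indicator (fun u : ℝ => |u| ^ (-α)) (-u))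
        = (Ico (-c) (0:ℝ)).indicator (fun u : ℝ => |u| ^ (-α)) := by
      funext u
      simp only [indicator_apply, mem_Ioc, mem_Ico, abs_neg]
      have : (0 < -u ∧ -u ≤ c) ↔ (-c ≤ u ∧ u < 0) := by
        constructor <;> rintro ⟨h1, h2⟩ <;> constructor <;> linarith
      rw [if_congr this rfl rfl]
    rw [heq] at hneg
    exact (integrable_indicator_iff measurableSet_Ico).1 hneg
  have hsub : Ioo a b ⊆ Ico (-c) 0 ∪ Icc 0 c := by
    intro u hu
    have h1 : -c ≤ u := by
      have : -|a| ≤ a := neg_abs_le a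
      have : -c ≤ a := by
        have := le_max_left |a| |b|; linarith
      linarith [hu.1]
    have h2 : u ≤ c := by
      have : b ≤ |b| := le_abs_self b
      have : b ≤ c := le_trans this (le_max_right _ _)
      linarith [hu.2]
    rcases lt_or_ge u 0 with h | h
    · exact Or.inl ⟨h1, h⟩
    · exact Or.inr ⟨h, h2⟩
  exact ((h3.union h2').mono_set hsub)

/-- Jensen's inequality for `exp` against a probability density `w`. -/
lemma jensen_exp {w u : ℝ → ℝ} (hw0 : ∀ y, 0 ≤ w y)
    (hw : Integrable w) (hw1 : (∫ y, w y) = 1)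
    (hu : Integrable (fun y => u y * w y))
    (he : Integrable (fun y => Real.exp (u y) * w y)) :
    Real.exp (∫ y, u y * w y) ≤ ∫ y, Real.exp (u y) * w y := by
  set c := ∫ y, u y * w y with hc
  have hpt : ∀ y, Real.exp c * w y + Real.exp c * (u y * w y) - Real.exp c * c * w y
      ≤ Real.exp (u y) * w y := by
    intro y
    have h1 : (u y - c) + 1 ≤ Real.exp (u y - c) := Real.add_one_le_exp _
    have h2 : Real.exp c * ((u y - c) + 1) ≤ Real.exp c * Real.exp (u y - c) :=
      mul_le_mul_of_nonneg_left h1 (Real.exp_pos c).le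
    rw [← Real.exp_add, show c + (u y - c) = u y from by ring] at h2
    have h2' : Real.exp c * ((u y - c) + 1) ≤ Real.exp (u y) := h2
    have h3 := mul_le_mul_of_nonneg_right h2' (hw0 y)
    calc Real.exp c * w y + Real.exp c * (u y * w y) - Real.exp c * c * w y
        = Real.exp c * ((u y - c) + 1) * w y := by ring
      _ ≤ Real.exp (u y) * w y := h3
  have hA : Integrable (fun y => Real.exp c * w y) := hw.const_mul _
  have hB : Integrable (fun y => Real.exp c * (u y * w y)) := hu.const_mul _
  have hC : Integrable (fun y => Real.exp c * c * w y) := hw.const_mul _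
  have hAB : Integrable (fun y => Real.exp c * w y + Real.exp c * (u y * w y)) := hA.add hB
  have hint : Integrable (fun y => Real.exp c * w y + Real.exp c * (u y * w y)
      - Real.exp c * c * w y) := hAB.sub hC
  have hmono := integral_mono hint he hpt
  have hcalc : (∫ y, (Real.exp c * w y + Real.exp c * (u y * w y)
      - Real.exp c * c * w y)) = Real.exp c := by
    rw [integral_sub hAB hC, integral_add hA hB,
      integral_const_mul, integral_const_mul, integral_const_mul, hw1, ← hc]
    ring
  rwa [hcalc] at hmono

/-- Brezis–Merle type ε-regularity estimate in one dimension: if `f ≥ 0` is integrable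
with `0 < ‖f‖_{L¹}` and `p‖f‖_{L¹} < π` for some `p ≥ 1`, then for every `R > 0`,
`∫_{B_R} exp((p/π) ∫ log((1+|y|)/|x−y|) f(y) dy) dx < ∞`. -/
theorem eps_regularity_exp_integrable (f : ℝ → ℝ) (p R : ℝ)
    (hpos : ∀ y, 0 ≤ f y)
    (hL1 : Integrable f)
    (hnz : 0 < ∫ y : ℝ, f y)
    (hp : 1 ≤ p) (hR : 0 < R)
    (hsmall : p * ∫ y : ℝ, f y < Real.pi) :
    IntegrableOn
      (fun x : ℝ => Real.exp ((p / Real.pi) *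
        ∫ y : ℝ, Real.log ((1 + |y|) / |x - y|) * f y))
      (Set.Ioo (-R) R) := by
  have hπ : (0:ℝ) < Real.pi := Real.pi_pos
  set m : ℝ := ∫ y : ℝ, f y with hm
  set α : ℝ := p * m / Real.pi with hα
  have hα0 : 0 < α := div_pos (mul_pos (lt_of_lt_of_le one_pos hp) hnz) hπ
  have hα1 : α < 1 := (div_lt_one hπ).2 hsmall
  set ν : Measure ℝ := volume.restrict (Ioo (-R) R) with hν
  set hfun : ℝ × ℝ → ℝ := fun z => ((1 + |z.2|) / |z.1 - z.2|) ^ α * f z.2 with hhfun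
  -- measurability of the kernel
  have hbase : Measurable fun z : ℝ × ℝ => (1 + |z.2|) / |z.1 - z.2| :=
    (measurable_const.add measurable_snd.abs).div (measurable_fst.sub measurable_snd).abs
  have hmeas_h : AEStronglyMeasurable hfun (ν.prod volume) :=
    ((hbase.pow measurable_const).aestronglyMeasurable.mul hL1.1.comp_snd)
  -- uniform pointwise bound on the kernel
  have hbound : ∀ y : ℝ, ∀ x ∈ Ioo (-R) R,
      ((1 + |y|) / |x - y|) ^ α ≤ (1 + R) * |x - y| ^ (-α) + 1 := by
    intro y x hx
    by_cases hxy : x = y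
    · subst hxy
      simp only [sub_self, abs_zero, div_zero]
      rw [Real.zero_rpow hα0.ne', Real.zero_rpow (neg_ne_zero.2 hα0.ne')]
      linarith
    · have ht : 0 < |x - y| := abs_pos.2 (sub_ne_zero.2 hxy)
      have hxR : |x| < R := abs_lt.2 ⟨hx.1, hx.2⟩
      have hyb : |y| ≤ |x| + |x - y| := by
        have := abs_sub_abs_le_abs_sub y x
        have h2 : |y - x| = |x - y| := abs_sub_comm y x
        linarith
      have h1 : (1 + |y|) / |x - y| ≤ (1 + R) / |x - y| + 1 := by
        have hnum : 1 + |y| ≤ (1 + R) + |x - y| := by linarith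
        calc (1 + |y|) / |x - y| ≤ ((1 + R) + |x - y|) / |x - y| := by gcongr
          _ = (1 + R) / |x - y| + 1 := by field_simp
      have hr0 : 0 ≤ (1 + |y|) / |x - y| := by positivity
      calc ((1 + |y|) / |x - y|) ^ α ≤ ((1 + R) / |x - y| + 1) ^ α :=
            Real.rpow_le_rpow hr0 h1 hα0.le
        _ ≤ ((1 + R) / |x - y|) ^ α + 1 ^ α := by
            exact real_rpow_add_le_add_rpow (by positivity) zero_le_one hα0.le hα1.le
        _ = (1 + R) ^ α * |x - y| ^ (-α) + 1 := by
            rw [Real.one_rpow, Real.div_rpow (by linarith) (abs_nonneg _),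
              Real.rpow_neg (abs_nonneg _), div_eq_mul_inv]
        _ ≤ (1 + R) * |x - y| ^ (-α) + 1 := by
            have h1R : (1 + R) ^ α ≤ 1 + R := by
              nth_rewrite 2 [← Real.rpow_one (1 + R)]
              exact Real.rpow_le_rpow_of_exponent_le (by linarith) hα1.le
            have := Real.rpow_nonneg (abs_nonneg (x - y)) (-α)
            nlinarith
  -- integrability of the singular factor, uniformly in `y`
  set ψ : ℝ → ℝ := (Ioo (-R) R).indicator (fun u => |u| ^ (-α)) with hψdef
  have hψ : Integrable ψ :=
    (integrable_indicator_iff measurableSet_Ioo).2 (integrableOn_abs_rpow_neg hα1 _ _)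
  have hψ0 : ∀ u, 0 ≤ ψ u := fun u =>
    indicator_nonneg (fun v _ => Real.rpow_nonneg (abs_nonneg v) _) u
  have hptbd : ∀ y x : ℝ, |x - y| ^ (-α) ≤ R ^ (-α) + ψ (x - y) := by
    intro y x
    by_cases h : |x - y| < R
    · have hmem : x - y ∈ Ioo (-R) R := by
        rcases abs_lt.1 h with ⟨h1, h2⟩; exact ⟨h1, h2⟩
      rw [hψdef, indicator_of_mem hmem]
      have : (0:ℝ) ≤ R ^ (-α) := Real.rpow_nonneg hR.le _
      linarith
    · push_neg at h
      have h1 : |x - y| ^ (-α) ≤ R ^ (-α) :=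
        Real.rpow_le_rpow_of_nonpos hR h (by linarith)
      have := hψ0 (x - y)
      linarith
  have hmeas_sing : ∀ y : ℝ, Measurable fun x : ℝ => |x - y| ^ (-α) := fun y =>
    ((measurable_id.sub measurable_const).abs.pow measurable_const)
  have hIoofin : volume (Ioo (-R) R) < ⊤ := measure_Ioo_lt_top
  have hψy : ∀ y : ℝ, Integrable (fun x => ψ (x - y)) := fun y => hψ.comp_sub_right y
  have hdom : ∀ y : ℝ, Integrable (fun x => R ^ (-α) + ψ (x - y)) ν := fun y =>
    (integrable_const _).add ((hψy y).restrict)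
  have Iy : ∀ y : ℝ, Integrable (fun x => |x - y| ^ (-α)) ν := by
    intro y
    refine (hdom y).mono' (hmeas_sing y).aestronglyMeasurable ?_
    refine Eventually.of_forall fun x => ?_
    rw [Real.norm_eq_abs, abs_of_nonneg (Real.rpow_nonneg (abs_nonneg _) _)]
    exact hptbd y x
  set K : ℝ := ∫ u, ψ u with hK
  set D : ℝ := R ^ (-α) * (2 * R) + K with hD
  have hvol : (volume (Ioo (-R) R)).toReal = 2 * R := by
    rw [Real.volume_Ioo, ENNReal.toReal_ofReal (by linarith)]
    ring
  have Dy : ∀ y : ℝ, (∫ x, |x - y| ^ (-α) ∂ν) ≤ D := by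
    intro y
    have h1 : (∫ x, |x - y| ^ (-α) ∂ν) ≤ ∫ x, (R ^ (-α) + ψ (x - y)) ∂ν :=
      integral_mono (Iy y) (hdom y) (fun x => hptbd y x)
    have hconst : Integrable (fun _ : ℝ => R ^ (-α)) ν := integrable_const _
    have hψyr : Integrable (fun x => ψ (x - y)) ν := (hψy y).restrict
    have h2 : (∫ x, (R ^ (-α) + ψ (x - y)) ∂ν)
        = R ^ (-α) * (2 * R) + ∫ x, ψ (x - y) ∂ν := by
      rw [integral_add hconst hψyr, hν, setIntegral_const, smul_eq_mul, measureReal_def, hvol]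
      ring
    have h3 : (∫ x, ψ (x - y) ∂ν) ≤ ∫ x, ψ (x - y) := by
      rw [hν]
      exact setIntegral_le_integral (hψy y) (Eventually.of_forall fun x => hψ0 _)
    have h4 : (∫ x, ψ (x - y)) = K := integral_sub_right_eq_self ψ y
    rw [h2] at h1; rw [h4] at h3
    rw [hD]; linarith
  -- slice integrability of the kernel
  have Ihy : ∀ y : ℝ, Integrable (fun x => ((1 + |y|) / |x - y|) ^ α) ν := by
    intro y
    refine (((Iy y).const_mul (1 + R)).add (integrable_const 1)).mono'
      ?_ ?_
    · exact (((measurable_const.add measurable_const.abs).div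
        (measurable_id.sub measurable_const).abs).pow measurable_const).aestronglyMeasurable
    · rw [hν]
      filter_upwards [ae_restrict_mem measurableSet_Ioo] with x hx
      rw [Real.norm_eq_abs, abs_of_nonneg (Real.rpow_nonneg (by positivity) _)]
      exact hbound y x hx
  set C : ℝ := (1 + R) * D + 2 * R with hC
  have hCy : ∀ y : ℝ, (∫ x, ((1 + |y|) / |x - y|) ^ α ∂ν) ≤ C := by
    intro y
    have hint2 : Integrable (fun x => (1 + R) * |x - y| ^ (-α) + 1) ν :=
      ((Iy y).const_mul _).add (integrable_const _)
    have h1 : (∫ x, ((1 + |y|) / |x - y|) ^ α ∂ν)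
        ≤ ∫ x, ((1 + R) * |x - y| ^ (-α) + 1) ∂ν := by
      refine setIntegral_mono_on (Ihy y) hint2 measurableSet_Ioo ?_
      intro x hx; exact hbound y x hx
    have hmul : Integrable (fun x => (1 + R) * |x - y| ^ (-α)) ν := (Iy y).const_mul _
    have hone : Integrable (fun _ : ℝ => (1:ℝ)) ν := integrable_const _
    have h2 : (∫ x, ((1 + R) * |x - y| ^ (-α) + 1) ∂ν)
        = (1 + R) * (∫ x, |x - y| ^ (-α) ∂ν) + 2 * R := by
      rw [integral_add hmul hone, integral_const_mul, hν, setIntegral_const, smul_eq_mul, measureReal_def, hvol]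
      ring
    have h3 := Dy y
    rw [h2] at h1
    rw [hC]
    nlinarith
  -- the double integral is finite
  have H : Integrable hfun (ν.prod volume) := by
    rw [integrable_prod_iff' hmeas_h]
    constructor
    · refine Eventually.of_forall fun y => ?_
      exact (Ihy y).mul_const (f y)
    · have hmeasI : AEStronglyMeasurable (fun y => ∫ x, ‖hfun (x, y)‖ ∂ν) volume := by
        have := (hmeas_h.norm.prod_swap).integral_prod_right'
        exact this
      refine (hL1.const_mul C).mono' hmeasI ?_
      refine Eventually.of_forall fun y => ?_
      have hnn : ∀ x, ‖hfun (x, y)‖ = ((1 + |y|) / |x - y|) ^ α * f y := by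
        intro x
        rw [Real.norm_eq_abs, abs_of_nonneg]
        exact mul_nonneg (Real.rpow_nonneg (by positivity) _) (hpos y)
      have h1 : (∫ x, ‖hfun (x, y)‖ ∂ν) = (∫ x, ((1 + |y|) / |x - y|) ^ α ∂ν) * f y := by
        simp_rw [hnn]
        rw [integral_mul_const]
      rw [Real.norm_eq_abs, abs_of_nonneg, h1]
      · exact mul_le_mul_of_nonneg_right (hCy y) (hpos y)
      · rw [h1]
        exact mul_nonneg (integral_nonneg fun x => Real.rpow_nonneg (by positivity) _) (hpos y)
  -- a.e. slice integrability and integrability of the majorant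
  have HG : Integrable (fun x => ∫ y, hfun (x, y)) ν := H.integral_prod_left
  have IG : Integrable (fun x => (∫ y, hfun (x, y)) * m⁻¹) ν := HG.mul_const _
  -- measurability of the target function
  have hlogmeas : AEStronglyMeasurable
      (fun z : ℝ × ℝ => Real.log ((1 + |z.2|) / |z.1 - z.2|) * f z.2) (ν.prod volume) :=
    ((Real.measurable_log.comp hbase).aestronglyMeasurable.mul hL1.1.comp_snd)
  have hF : AEStronglyMeasurable
      (fun x : ℝ => Real.exp ((p / Real.pi) *
        ∫ y : ℝ, Real.log ((1 + |y|) / |x - y|) * f y)) ν := by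
    exact Real.continuous_exp.comp_aestronglyMeasurable
      (hlogmeas.integral_prod_right'.const_mul _)
  -- conclude by Jensen's inequality
  refine IG.mono' hF ?_
  filter_upwards [H.prod_right_ae, ae_restrict_mem measurableSet_Ioo] with x hx hmem
  rw [Real.norm_eq_abs, abs_of_pos (Real.exp_pos _)]
  have hne : ∀ᵐ (y : ℝ), y ≠ x := by
    rw [ae_iff]
    simp only [not_not, Set.setOf_eq_eq_singleton]
    exact measure_singleton x
  set w : ℝ → ℝ := fun y => f y * m⁻¹ with hw
  set u : ℝ → ℝ := fun y => α * Real.log ((1 + |y|) / |x - y|) with hu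
  have hw0 : ∀ y, 0 ≤ w y := fun y => mul_nonneg (hpos y) (inv_nonneg.2 hnz.le)
  have hwInt : Integrable w := hL1.mul_const _
  have hw1 : (∫ y, w y) = 1 := by
    rw [hw]
    rw [integral_mul_const, ← hm, mul_inv_cancel₀ hnz.ne']
  have hkey : ∀ y : ℝ, y ≠ x → Real.exp (u y) = ((1 + |y|) / |x - y|) ^ α := by
    intro y hy
    have hr : 0 < (1 + |y|) / |x - y| :=
      div_pos (by positivity) (abs_pos.2 (sub_ne_zero.2 hy.symm))
    rw [Real.rpow_def_of_pos hr, mul_comm]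
  have he : Integrable (fun y => Real.exp (u y) * w y) := by
    refine (hx.mul_const m⁻¹).congr ?_
    filter_upwards [hne] with y hy
    rw [hhfun]
    dsimp only
    rw [hkey y hy, hw]
    ring
  have humeas : AEStronglyMeasurable (fun y => u y * w y) volume := by
    refine AEStronglyMeasurable.mul ?_ (hL1.1.mul_const _)
    exact (measurable_const.mul (Real.measurable_log.comp
      ((measurable_const.add measurable_abs).div
        (measurable_const.sub measurable_id).abs))).aestronglyMeasurable
  have huInt : Integrable (fun y => u y * w y) := by
    refine (he.add (hwInt.const_mul (R + 1))).mono' humeas ?_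
    filter_upwards [hne] with y hy
    rw [Real.norm_eq_abs, abs_mul, abs_of_nonneg (hw0 y)]
    have h1 : |u y| ≤ Real.exp (u y) + Real.exp (-(u y)) := abs_le_exp_add_exp_neg _
    have hr : 0 < (1 + |y|) / |x - y| :=
      div_pos (by positivity) (abs_pos.2 (sub_ne_zero.2 hy.symm))
    have ht : 0 < |x - y| := abs_pos.2 (sub_ne_zero.2 hy.symm)
    have h2 : Real.exp (-(u y)) ≤ R + 1 := by
      have hinv : Real.exp (-(u y)) = (|x - y| / (1 + |y|)) ^ α := by
        have : -(u y) = α * Real.log (|x - y| / (1 + |y|)) := by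
          rw [hu]
          dsimp only
          rw [Real.log_div ht.ne' (by positivity : (0:ℝ) < 1 + |y|).ne',
            Real.log_div (by positivity : (0:ℝ) < 1 + |y|).ne' ht.ne']
          ring
        rw [this, Real.rpow_def_of_pos (div_pos ht (by positivity)), mul_comm]
      rw [hinv]
      have hb : |x - y| / (1 + |y|) ≤ R + 1 := by
        rw [div_le_iff₀ (by positivity)]
        have h3 : |x - y| ≤ |x| + |y| := abs_sub x y
        have h4 : |x| < R := abs_lt.2 ⟨hmem.1, hmem.2⟩
        nlinarith [abs_nonneg y]
      calc (|x - y| / (1 + |y|)) ^ α ≤ (R + 1) ^ α :=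
            Real.rpow_le_rpow (by positivity) hb hα0.le
        _ ≤ (R + 1) ^ (1:ℝ) := Real.rpow_le_rpow_of_exponent_le (by linarith) hα1.le
        _ = R + 1 := Real.rpow_one _
    have h5 : Real.exp (u y) + Real.exp (-(u y)) ≤ Real.exp (u y) + (R + 1) := by linarith
    have := mul_le_mul_of_nonneg_right (h1.trans h5) (hw0 y)
    calc |u y| * w y ≤ (Real.exp (u y) + (R + 1)) * w y := this
      _ = Real.exp (u y) * w y + (R + 1) * w y := by ring
  have hjen := jensen_exp hw0 hwInt hw1 huInt he
  -- identify the left-hand side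
  have hLHS : (∫ y, u y * w y) = (p / Real.pi) * ∫ y, Real.log ((1 + |y|) / |x - y|) * f y := by
    have heq : (fun y => u y * w y)
        = fun y => (α * m⁻¹) * (Real.log ((1 + |y|) / |x - y|) * f y) := by
      funext y
      rw [hu, hw]
      ring
    rw [heq, integral_const_mul]
    congr 1
    rw [hα]
    field_simp
  have hRHS : (∫ y, Real.exp (u y) * w y) = (∫ y, hfun (x, y)) * m⁻¹ := by
    rw [← integral_mul_const]
    refine integral_congr_ae ?_
    filter_upwards [hne] with y hy
    rw [hhfun]
    dsimp only
    rw [hkey y hy, hw]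
    ring
  rw [hLHS, hRHS] at hjen
  exact hjen
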